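/- Let M₁, M₂ ∈ M₂(ℝ) be linearly independent symmetric matrices. If γ̃ and γ̃' are both symmetric positive-definite 2×2 real matrices with determinant 1 satisfying ⟨γ̃, M₁⟩ = ⟨γ̃, M₂⟩ = 0 and ⟨γ̃', M₁⟩ = ⟨γ̃', M₂⟩ = 0, then γ̃ = γ̃'. -/

import Mathlib

open Matrix

lemma sum_sq_eq_zero₃ (x y z : ℝ) (h : x*x + y*y + z*z = 0) :
    x = 0 ∧ y = 0 ∧ z = 0 := by
  refine ⟨?_, ?_, ?_⟩ <;> nlinarith [sq_nonneg x, sq_nonneg y, sq_nonneg z]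

/-- If the "cross product" of two symmetric matrices (as vectors) vanishes, and both are
positive with unit determinant, they coincide. -/
lemma prop_step (a b c a' b' c' : ℝ) (ha : 0 < a) (ha' : 0 < a')
    (hdet : a*c - b*b = 1) (hdet' : a'*c' - b'*b' = 1)
    (hz1 : 2*b*c' - 2*c*b' = 0) (hz2 : c*a' - a*c' = 0) (hz3 : 2*a*b' - 2*b*a' = 0) :
    a = a' ∧ b = b' ∧ c = c' := by
  have hU : 0 < a*a + 4*b*b + c*c := by nlinarith [sq_nonneg b, sq_nonneg c]
  have hUa : (a*a + 4*b*b + c*c) * a' = (a*a' + 4*b*b' + c*c') * a := by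
    linear_combination c*hz2 - 2*b*hz3
  have hUb : (a*a + 4*b*b + c*c) * b' = (a*a' + 4*b*b' + c*c') * b := by
    linear_combination (a/2)*hz3 - (c/2)*hz1
  have hUc : (a*a + 4*b*b + c*c) * c' = (a*a' + 4*b*b' + c*c') * c := by
    linear_combination 2*b*hz1 - a*hz2
  have hUT : (a*a + 4*b*b + c*c) * (a*a + 4*b*b + c*c)
      = (a*a' + 4*b*b' + c*c') * (a*a' + 4*b*b' + c*c') := by
    linear_combination ((a*a' + 4*b*b' + c*c')*(a*a' + 4*b*b' + c*c'))*hdet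
      - ((a*a + 4*b*b + c*c)*(a*a + 4*b*b + c*c))*hdet'
      + ((a*a + 4*b*b + c*c)*c')*hUa
      + ((a*a' + 4*b*b' + c*c')*a)*hUc
      - ((a*a + 4*b*b + c*c)*b' + (a*a' + 4*b*b' + c*c')*b)*hUb
  have hT : 0 < a*a' + 4*b*b' + c*c' := by nlinarith [hUa, mul_pos hU ha']
  have hTU : a*a' + 4*b*b' + c*c' = a*a + 4*b*b + c*c := by
    have hfac : ((a*a' + 4*b*b' + c*c') - (a*a + 4*b*b + c*c))
        * ((a*a' + 4*b*b' + c*c') + (a*a + 4*b*b + c*c)) = 0 := by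
      linear_combination -hUT
    rcases mul_eq_zero.mp hfac with h | h
    · linarith
    · linarith
  rw [hTU] at hUa hUb hUc
  exact ⟨(mul_left_cancel₀ (ne_of_gt hU) hUa).symm,
    (mul_left_cancel₀ (ne_of_gt hU) hUb).symm,
    (mul_left_cancel₀ (ne_of_gt hU) hUc).symm⟩

/-- Scalar core of the uniqueness argument. -/
lemma key_scalar (p1 q1 s1 p2 q2 s2 a b c a' b' c' : ℝ)
    (hind : ∀ α β : ℝ, α*p1+β*p2 = 0 → α*q1+β*q2 = 0 → α*s1+β*s2 = 0 → α = 0 ∧ β = 0)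
    (e1 : p1*a + 2*q1*b + s1*c = 0) (e2 : p2*a + 2*q2*b + s2*c = 0)
    (e1' : p1*a' + 2*q1*b' + s1*c' = 0) (e2' : p2*a' + 2*q2*b' + s2*c' = 0)
    (ha : 0 < a) (ha' : 0 < a')
    (hdet : a*c - b*b = 1) (hdet' : a'*c' - b'*b' = 1) :
    a = a' ∧ b = b' ∧ c = c' := by
  set w1 : ℝ := 2*b*c' - 2*c*b' with hw1def
  set w2 : ℝ := c*a' - a*c' with hw2def
  set w3 : ℝ := 2*a*b' - 2*b*a' with hw3def
  set W : ℝ := w1*w1 + w2*w2 + w3*w3 with hWdef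
  -- the cross-product identities
  have idp1 : W*p1 = (p1*w1+q1*w2+s1*w3)*w1 := by
    linear_combination (w2*c - w3*(2*b)) * e1' - (w2*c' - w3*(2*b')) * e1
  have idq1 : W*q1 = (p1*w1+q1*w2+s1*w3)*w2 := by
    linear_combination (w3*a - w1*c) * e1' - (w3*a' - w1*c') * e1
  have ids1 : W*s1 = (p1*w1+q1*w2+s1*w3)*w3 := by
    linear_combination (w1*(2*b) - w2*a) * e1' - (w1*(2*b') - w2*a') * e1
  have idp2 : W*p2 = (p2*w1+q2*w2+s2*w3)*w1 := by
    linear_combination (w2*c - w3*(2*b)) * e2' - (w2*c' - w3*(2*b')) * e2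
  have idq2 : W*q2 = (p2*w1+q2*w2+s2*w3)*w2 := by
    linear_combination (w3*a - w1*c) * e2' - (w3*a' - w1*c') * e2
  have ids2 : W*s2 = (p2*w1+q2*w2+s2*w3)*w3 := by
    linear_combination (w1*(2*b) - w2*a) * e2' - (w1*(2*b') - w2*a') * e2
  have hw : w1 = 0 ∧ w2 = 0 ∧ w3 = 0 := by
    by_cases hW : W = 0
    · exact sum_sq_eq_zero₃ w1 w2 w3 (by rw [← hWdef]; exact hW)
    · exfalso
      have h := hind (p2*w1+q2*w2+s2*w3) (-(p1*w1+q1*w2+s1*w3)) ?_ ?_ ?_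
      · obtain ⟨hc2, hc1⟩ := h
        have hc1' : p1*w1+q1*w2+s1*w3 = 0 := by linarith [neg_eq_zero.mp hc1]
        have hp1 : p1 = 0 := by
          have h0 : W * p1 = 0 := by rw [idp1, hc1']; ring
          exact (mul_eq_zero.mp h0).resolve_left hW
        have hq1 : q1 = 0 := by
          have h0 : W * q1 = 0 := by rw [idq1, hc1']; ring
          exact (mul_eq_zero.mp h0).resolve_left hW
        have hs1 : s1 = 0 := by
          have h0 : W * s1 = 0 := by rw [ids1, hc1']; ring
          exact (mul_eq_zero.mp h0).resolve_left hW
        have h10 := hind 1 0 (by rw [hp1]; ring) (by rw [hq1]; ring) (by rw [hs1]; ring)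
        exact one_ne_zero h10.1
      · have h0 : W * ((p2*w1+q2*w2+s2*w3)*p1 + (-(p1*w1+q1*w2+s1*w3))*p2) = 0 := by
          linear_combination (p2*w1+q2*w2+s2*w3) * idp1 - (p1*w1+q1*w2+s1*w3) * idp2
        exact (mul_eq_zero.mp h0).resolve_left hW
      · have h0 : W * ((p2*w1+q2*w2+s2*w3)*q1 + (-(p1*w1+q1*w2+s1*w3))*q2) = 0 := by
          linear_combination (p2*w1+q2*w2+s2*w3) * idq1 - (p1*w1+q1*w2+s1*w3) * idq2
        exact (mul_eq_zero.mp h0).resolve_left hW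
      · have h0 : W * ((p2*w1+q2*w2+s2*w3)*s1 + (-(p1*w1+q1*w2+s1*w3))*s2) = 0 := by
          linear_combination (p2*w1+q2*w2+s2*w3) * ids1 - (p1*w1+q1*w2+s1*w3) * ids2
        exact (mul_eq_zero.mp h0).resolve_left hW
  obtain ⟨hz1, hz2, hz3⟩ := hw
  have hz1' : 2*b*c' - 2*c*b' = 0 := by rw [← hw1def]; exact hz1
  have hz2' : c*a' - a*c' = 0 := by rw [← hw2def]; exact hz2
  have hz3' : 2*a*b' - 2*b*a' = 0 := by rw [← hw3def]; exact hz3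
  exact prop_step a b c a' b' c' ha ha' hdet hdet' hz1' hz2' hz3'

/-- The Frobenius inner product `⟨A,B⟩ = tr(AᵀB)`. -/
noncomputable def frob (A B : Matrix (Fin 2) (Fin 2) ℝ) : ℝ := (Aᵀ * B).trace

/-- A symmetric positive-definite 2×2 matrix of determinant one is uniquely determined by
Frobenius-orthogonality to two linearly independent symmetric matrices. -/
theorem stmt10 (M₁ M₂ : Matrix (Fin 2) (Fin 2) ℝ)
    (h₁ : M₁.IsSymm) (h₂ : M₂.IsSymm)
    (hindep : LinearIndependent ℝ ![M₁, M₂])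
    (γt γt' : Matrix (Fin 2) (Fin 2) ℝ)
    (hγpd : γt.PosDef) (hγdet : γt.det = 1)
    (hγ'pd : γt'.PosDef) (hγ'det : γt'.det = 1)
    (horth₁ : frob γt M₁ = 0) (horth₂ : frob γt M₂ = 0)
    (horth₁' : frob γt' M₁ = 0) (horth₂' : frob γt' M₂ = 0) :
    γt = γt' := by
  -- symmetry of γt, γt'
  have hγs : γt 1 0 = γt 0 1 := by
    have h := congrFun (congrFun hγpd.isHermitian.eq 0) 1
    simpa [Matrix.conjTranspose_apply] using h
  have hγ's : γt' 1 0 = γt' 0 1 := by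
    have h := congrFun (congrFun hγ'pd.isHermitian.eq 0) 1
    simpa [Matrix.conjTranspose_apply] using h
  have hM1s : M₁ 1 0 = M₁ 0 1 := by
    have h := congrFun (congrFun h₁ 0) 1
    simpa [Matrix.transpose_apply] using h
  have hM2s : M₂ 1 0 = M₂ 0 1 := by
    have h := congrFun (congrFun h₂ 0) 1
    simpa [Matrix.transpose_apply] using h
  -- expand frob
  have expand : ∀ (A B : Matrix (Fin 2) (Fin 2) ℝ), frob A B =
      A 0 0 * B 0 0 + A 1 0 * B 1 0 + A 0 1 * B 0 1 + A 1 1 * B 1 1 := by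
    intro A B
    simp only [frob, Matrix.trace_fin_two, Matrix.mul_apply, Fin.sum_univ_two,
      Matrix.transpose_apply]
    ring
  rw [expand] at horth₁ horth₂ horth₁' horth₂'
  rw [hγs, hM1s] at horth₁
  rw [hγs, hM2s] at horth₂
  rw [hγ's, hM1s] at horth₁'
  rw [hγ's, hM2s] at horth₂'
  -- positivity of the (0,0) entries
  have hapos : 0 < γt 0 0 := by
    have hx : (![1, 0] : Fin 2 → ℝ) ≠ 0 := by
      intro h
      have := congrFun h 0
      simp at this
    have := hγpd.dotProduct_mulVec_pos hx
    simpa [dotProduct, Matrix.mulVec, Fin.sum_univ_two] using this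
  have ha'pos : 0 < γt' 0 0 := by
    have hx : (![1, 0] : Fin 2 → ℝ) ≠ 0 := by
      intro h
      have := congrFun h 0
      simp at this
    have := hγ'pd.dotProduct_mulVec_pos hx
    simpa [dotProduct, Matrix.mulVec, Fin.sum_univ_two] using this
  -- determinants
  have hdet : γt 0 0 * γt 1 1 - γt 0 1 * γt 0 1 = 1 := by
    have h := hγdet
    rw [Matrix.det_fin_two, hγs] at h
    linarith
  have hdet' : γt' 0 0 * γt' 1 1 - γt' 0 1 * γt' 0 1 = 1 := by
    have h := hγ'det
    rw [Matrix.det_fin_two, hγ's] at h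
    linarith
  -- linear independence in scalar form
  have hind : ∀ α β : ℝ, α * M₁ 0 0 + β * M₂ 0 0 = 0 →
      α * M₁ 0 1 + β * M₂ 0 1 = 0 → α * M₁ 1 1 + β * M₂ 1 1 = 0 → α = 0 ∧ β = 0 := by
    intro α β hp hq hs
    have hcomb : α • M₁ + β • M₂ = 0 := by
      ext i j
      fin_cases i <;> fin_cases j <;>
        simp only [Matrix.add_apply, Matrix.smul_apply, smul_eq_mul, Matrix.zero_apply]
      · exact hp
      · exact hq
      · show α * M₁ 1 0 + β * M₂ 1 0 = 0
        rw [hM1s, hM2s]; exact hq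
      · exact hs
    exact LinearIndependent.pair_iff.mp hindep α β hcomb
  have key := key_scalar (M₁ 0 0) (M₁ 0 1) (M₁ 1 1) (M₂ 0 0) (M₂ 0 1) (M₂ 1 1)
    (γt 0 0) (γt 0 1) (γt 1 1) (γt' 0 0) (γt' 0 1) (γt' 1 1)
    hind (by linarith) (by linarith) (by linarith) (by linarith)
    hapos ha'pos hdet hdet'
  obtain ⟨ea, eb, ec⟩ := key
  ext i j
  fin_cases i <;> fin_cases j
  · exact ea
  · exact eb
  · show γt 1 0 = γt' 1 0
    rw [hγs, hγ's]; exact eb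
  · exact ec
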